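/- Let u : [0,∞) × [0,1] → ℝ be continuous, once continuously differentiable in t and twice continuously differentiable in ξ, satisfying the deterministic Burgers equation ∂_t u(t,ξ) = ∂_ξξ u(t,ξ) + ∂_ξ(u(t,ξ)²) for all t > 0, ξ ∈ (0,1), with Dirichlet boundary conditions u(t,0) = u(t,1) = 0 for all t ≥ 0. Then for every t ≥ 0, ∫₀¹ u(t,ξ)⁴ dξ ≤ exp(−π² t/4)·∫₀¹ u(0,ξ)⁴ dξ. -/

import Mathlib

open MeasureTheory intervalIntegral

open Set Filter Topology

lemma sq_integral_le {f : ℝ → ℝ} (hf : ContinuousOn f (Set.Icc 0 1)) :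
    (∫ x in (0:ℝ)..1, f x) ^ 2 ≤ ∫ x in (0:ℝ)..1, f x ^ 2 := by
  have huIcc : Set.uIcc (0:ℝ) 1 = Set.Icc 0 1 := Set.uIcc_of_le zero_le_one
  have hfi : IntervalIntegrable f volume 0 1 := (huIcc ▸ hf).intervalIntegrable
  have h2 : IntervalIntegrable (fun x => f x ^ 2) volume 0 1 :=
    (huIcc ▸ (hf.pow 2)).intervalIntegrable
  set c := ∫ x in (0:ℝ)..1, f x with hc
  have key : 0 ≤ ∫ x in (0:ℝ)..1, (f x - c) ^ 2 :=
    intervalIntegral.integral_nonneg zero_le_one fun x _ => sq_nonneg _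
  have hrw : (fun x => (f x - c) ^ 2) = fun x => (f x ^ 2 - 2 * c * f x) + c ^ 2 := by
    funext x; ring
  rw [hrw, intervalIntegral.integral_add (h2.sub (hfi.const_mul (2 * c)))
      intervalIntegrable_const,
    intervalIntegral.integral_sub h2 (hfi.const_mul (2 * c)),
    intervalIntegral.integral_const_mul, intervalIntegral.integral_const] at key
  rw [← hc] at key
  simp only [smul_eq_mul, sub_zero, one_mul] at key
  nlinarith [key]

lemma poincare {v v' : ℝ → ℝ} (hv : ∀ x ∈ Set.Icc (0:ℝ) 1, HasDerivAt v (v' x) x)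
    (hv' : ContinuousOn v' (Set.Icc 0 1)) (hv0 : v 0 = 0) :
    ∫ x in (0:ℝ)..1, v x ^ 2 ≤ ∫ x in (0:ℝ)..1, v' x ^ 2 := by
  have huIcc : Set.uIcc (0:ℝ) 1 = Set.Icc 0 1 := Set.uIcc_of_le zero_le_one
  set C := ∫ x in (0:ℝ)..1, v' x ^ 2 with hC
  have habs : ContinuousOn (fun x => |v' x|) (Set.Icc 0 1) := hv'.abs
  have habs_sq : (∫ x in (0:ℝ)..1, |v' x|) ^ 2 ≤ ∫ x in (0:ℝ)..1, |v' x| ^ 2 :=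
    sq_integral_le habs
  have habs_int : IntervalIntegrable (fun x => |v' x|) volume 0 1 :=
    (huIcc ▸ habs).intervalIntegrable
  have hCeq : (∫ x in (0:ℝ)..1, |v' x| ^ 2) = C := by
    rw [hC]; congr 1; funext x; exact sq_abs _
  have hpt : ∀ ξ ∈ Set.Icc (0:ℝ) 1, v ξ ^ 2 ≤ C := by
    intro ξ hξ
    have hsub : Set.uIcc 0 ξ ⊆ Set.Icc (0:ℝ) 1 := by
      rw [Set.uIcc_of_le hξ.1]
      exact Set.Icc_subset_Icc le_rfl hξ.2
    have hftc : ∫ x in (0:ℝ)..ξ, v' x = v ξ - v 0 :=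
      intervalIntegral.integral_eq_sub_of_hasDerivAt
        (fun x hx => hv x (hsub hx))
        ((hv'.mono hsub).intervalIntegrable)
    have hveq : v ξ = ∫ x in (0:ℝ)..ξ, v' x := by rw [hftc, hv0, sub_zero]
    have h1 : |v ξ| ≤ ∫ x in (0:ℝ)..ξ, |v' x| := by
      rw [hveq]; exact intervalIntegral.abs_integral_le_integral_abs hξ.1
    have h2 : (∫ x in (0:ℝ)..ξ, |v' x|) ≤ ∫ x in (0:ℝ)..1, |v' x| :=
      intervalIntegral.integral_mono_interval le_rfl hξ.1 hξ.2
        (Filter.Eventually.of_forall fun x => abs_nonneg _) habs_int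
    calc v ξ ^ 2 = |v ξ| ^ 2 := (sq_abs _).symm
      _ ≤ (∫ x in (0:ℝ)..1, |v' x|) ^ 2 :=
          pow_le_pow_left₀ (abs_nonneg _) (h1.trans h2) 2
      _ ≤ ∫ x in (0:ℝ)..1, |v' x| ^ 2 := habs_sq
      _ = C := hCeq
  have hv_cont : ContinuousOn v (Set.Icc 0 1) := fun x hx =>
    (hv x hx).continuousAt.continuousWithinAt
  have hv2_int : IntervalIntegrable (fun x => v x ^ 2) volume 0 1 :=
    (huIcc ▸ (hv_cont.pow 2)).intervalIntegrable
  calc (∫ x in (0:ℝ)..1, v x ^ 2) ≤ ∫ _x in (0:ℝ)..1, C :=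
        intervalIntegral.integral_mono_on zero_le_one hv2_int
          intervalIntegrable_const hpt
    _ = C := by simp

/-- Decay of the `L⁴` norm for the deterministic Burgers equation
`∂_t u = ∂_ξξ u + ∂_ξ(u²)` on `(0,1)` with Dirichlet boundary conditions:
`∫₀¹ u(t,ξ)⁴ dξ ≤ e^{−π² t/4} ∫₀¹ u(0,ξ)⁴ dξ` for all `t ≥ 0`. -/
theorem stmt15 (u ut uξ uξξ : ℝ → ℝ → ℝ)
    (hu_cont : ContinuousOn (fun p : ℝ × ℝ => u p.1 p.2)
      (Set.Ici (0:ℝ) ×ˢ Set.Icc (0:ℝ) 1))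
    (hut : ∀ t ∈ Set.Ici (0:ℝ), ∀ ξ ∈ Set.Icc (0:ℝ) 1,
      HasDerivAt (fun s => u s ξ) (ut t ξ) t)
    (huξ : ∀ t ∈ Set.Ici (0:ℝ), ∀ ξ ∈ Set.Icc (0:ℝ) 1,
      HasDerivAt (fun η => u t η) (uξ t ξ) ξ)
    (huξξ : ∀ t ∈ Set.Ici (0:ℝ), ∀ ξ ∈ Set.Icc (0:ℝ) 1,
      HasDerivAt (fun η => uξ t η) (uξξ t ξ) ξ)
    (hut_cont : ContinuousOn (fun p : ℝ × ℝ => ut p.1 p.2)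
      (Set.Ici (0:ℝ) ×ˢ Set.Icc (0:ℝ) 1))
    (huξ_cont : ContinuousOn (fun p : ℝ × ℝ => uξ p.1 p.2)
      (Set.Ici (0:ℝ) ×ˢ Set.Icc (0:ℝ) 1))
    (huξξ_cont : ContinuousOn (fun p : ℝ × ℝ => uξξ p.1 p.2)
      (Set.Ici (0:ℝ) ×ˢ Set.Icc (0:ℝ) 1))
    (hpde : ∀ t : ℝ, 0 < t → ∀ ξ ∈ Set.Ioo (0:ℝ) 1,
      ut t ξ = uξξ t ξ + deriv (fun η => u t η ^ 2) ξ)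
    (hbc : ∀ t : ℝ, 0 ≤ t → u t 0 = 0 ∧ u t 1 = 0) :
    ∀ t : ℝ, 0 ≤ t →
      (∫ ξ in (0:ℝ)..1, u t ξ ^ 4) ≤
        Real.exp (-(Real.pi ^ 2) * t / 4) * ∫ ξ in (0:ℝ)..1, u 0 ξ ^ 4 := by
  intro t ht
  rcases eq_or_lt_of_le ht with rfl | htpos
  · norm_num
  have hsq : Set.Ioc (0:ℝ) 1 ⊆ Set.Icc 0 1 := Set.Ioc_subset_Icc_self
  have hIoc : Set.uIoc (0:ℝ) 1 = Set.Ioc 0 1 := Set.uIoc_of_le zero_le_one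
  have huIcc : Set.uIcc (0:ℝ) 1 = Set.Icc 0 1 := Set.uIcc_of_le zero_le_one
  -- slices of jointly continuous functions are continuous
  have hcont_slice : ∀ {w : ℝ → ℝ → ℝ},
      ContinuousOn (fun p : ℝ × ℝ => w p.1 p.2) (Set.Ici (0:ℝ) ×ˢ Set.Icc (0:ℝ) 1) →
      ∀ {s : ℝ}, 0 ≤ s → ContinuousOn (fun ξ => w s ξ) (Set.Icc 0 1) := by
    intro w hw s hs
    exact hw.comp ((Continuous.prodMk_right s).continuousOn) fun ξ hξ => ⟨hs, hξ⟩
  have hmeas_slice : ∀ {f : ℝ → ℝ}, ContinuousOn f (Set.Icc 0 1) →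
      AEStronglyMeasurable f (volume.restrict (Set.uIoc (0:ℝ) 1)) := by
    intro f hf
    rw [hIoc]
    exact (hf.mono hsq).aestronglyMeasurable measurableSet_Ioc
  -- bounds on a compact box
  obtain ⟨M, hM⟩ := ((isCompact_Icc (a := (0:ℝ)) (b := t+1)).prod
      (isCompact_Icc (a := (0:ℝ)) (b := 1))).exists_bound_of_continuousOn
    (hu_cont.mono (Set.prod_mono (fun x hx => hx.1) subset_rfl))
  obtain ⟨Mt, hMt⟩ := ((isCompact_Icc (a := (0:ℝ)) (b := t+1)).prod
      (isCompact_Icc (a := (0:ℝ)) (b := 1))).exists_bound_of_continuousOn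
    (hut_cont.mono (Set.prod_mono (fun x hx => hx.1) subset_rfl))
  -- differentiability of the energy
  have hEd : ∀ s : ℝ, 0 < s → s ≤ t →
      HasDerivAt (fun r => ∫ ξ in (0:ℝ)..1, u r ξ ^ 4)
        (∫ ξ in (0:ℝ)..1, 4 * u s ξ ^ 3 * ut s ξ) s := by
    intro s hs hst
    have hε : 0 < min s 1 := lt_min hs one_pos
    have hball : Metric.ball s (min s 1) ⊆ Set.Ioo 0 (t+1) := by
      intro x hx
      rw [Metric.mem_ball, Real.dist_eq] at hx
      have h1 := abs_lt.1 hx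
      constructor
      · linarith [min_le_left s 1]
      · linarith [min_le_right s 1]
    refine (intervalIntegral.hasDerivAt_integral_of_dominated_loc_of_deriv_le (𝕜 := ℝ)
      (μ := volume) (F := fun x ξ => u x ξ ^ 4) (F' := fun x ξ => 4 * u x ξ ^ 3 * ut x ξ)
      (x₀ := s) (a := 0) (b := 1)
      (bound := fun _ => 4 * M ^ 3 * Mt) (s := Metric.ball s (min s 1)) (Metric.ball_mem_nhds s hε)
      ?_ ?_ ?_ ?_ ?_ ?_).2
    · filter_upwards [Metric.ball_mem_nhds s hε] with x hx
      exact hmeas_slice ((hcont_slice hu_cont (hball hx).1.le).pow 4)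
    · exact (huIcc ▸ ((hcont_slice hu_cont hs.le).pow 4)).intervalIntegrable
    · exact hmeas_slice ((continuousOn_const.mul
        ((hcont_slice hu_cont hs.le).pow 3)).mul (hcont_slice hut_cont hs.le))
    · refine Filter.Eventually.of_forall fun ξ hξ x hx => ?_
      have hxK : ((x, ξ) : ℝ × ℝ) ∈ Set.Icc (0:ℝ) (t+1) ×ˢ Set.Icc (0:ℝ) 1 :=
        ⟨⟨(hball hx).1.le, (hball hx).2.le⟩, hsq (hIoc ▸ hξ)⟩
      have h1 := hM _ hxK
      have h2 := hMt _ hxK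
      rw [Real.norm_eq_abs] at h1 h2 ⊢
      rw [abs_mul, abs_mul, abs_pow]
      have h4 : |(4:ℝ)| = 4 := by norm_num
      rw [h4]
      have h5 : |u x ξ| ^ 3 ≤ M ^ 3 := pow_le_pow_left₀ (abs_nonneg _) h1 3
      have h6 : (0:ℝ) ≤ |u x ξ| ^ 3 := by positivity
      beta_reduce
      nlinarith [abs_nonneg (ut x ξ), mul_le_mul h5 h2 (abs_nonneg (ut x ξ)) (h6.trans h5)]
    · exact intervalIntegrable_const
    · refine Filter.Eventually.of_forall fun ξ hξ x hx => ?_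
      have hx0 : (0:ℝ) ≤ x := (hball hx).1.le
      have hξ1 : ξ ∈ Set.Icc (0:ℝ) 1 := hsq (hIoc ▸ hξ)
      simpa using (hut x hx0 ξ hξ1).fun_pow 4
  -- the differential inequality
  have hbound : ∀ s : ℝ, 0 < s → s ≤ t →
      (∫ ξ in (0:ℝ)..1, 4 * u s ξ ^ 3 * ut s ξ) ≤
        (-(Real.pi ^ 2) / 4) * ∫ ξ in (0:ℝ)..1, u s ξ ^ 4 := by
    intro s hs hst
    have hs' : (0:ℝ) ≤ s := hs.le
    have hcu : ContinuousOn (fun ξ => u s ξ) (Set.Icc 0 1) := hcont_slice hu_cont hs'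
    have hcux : ContinuousOn (fun ξ => uξ s ξ) (Set.Icc 0 1) := hcont_slice huξ_cont hs'
    have hcuxx : ContinuousOn (fun ξ => uξξ s ξ) (Set.Icc 0 1) := hcont_slice huξξ_cont hs'
    -- derivative of the auxiliary function H
    have hHd : ∀ ξ ∈ Set.Icc (0:ℝ) 1,
        HasDerivAt (fun η => 4 * u s η ^ 3 * uξ s η + (8/5) * u s η ^ 5)
          (12 * u s ξ ^ 2 * uξ s ξ ^ 2 + 4 * u s ξ ^ 3 * uξξ s ξ
            + 8 * u s ξ ^ 4 * uξ s ξ) ξ := by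
      intro ξ hξ
      have h1 := huξ s hs' ξ hξ
      have h2 := huξξ s hs' ξ hξ
      have h3 := (((h1.fun_pow 3).const_mul (4:ℝ)).fun_mul h2).fun_add ((h1.fun_pow 5).const_mul ((8:ℝ)/5))
      refine h3.congr_deriv ?_
      push_cast
      ring
    have hH'cont : ContinuousOn (fun ξ => 12 * u s ξ ^ 2 * uξ s ξ ^ 2
        + 4 * u s ξ ^ 3 * uξξ s ξ + 8 * u s ξ ^ 4 * uξ s ξ) (Set.Icc 0 1) :=
      (((continuousOn_const.mul (hcu.pow 2)).mul (hcux.pow 2)).add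
        ((continuousOn_const.mul (hcu.pow 3)).mul hcuxx)).add
        ((continuousOn_const.mul (hcu.pow 4)).mul hcux)
    have hftc : ∫ ξ in (0:ℝ)..1, (12 * u s ξ ^ 2 * uξ s ξ ^ 2
        + 4 * u s ξ ^ 3 * uξξ s ξ + 8 * u s ξ ^ 4 * uξ s ξ) = 0 := by
      rw [intervalIntegral.integral_eq_sub_of_hasDerivAt
        (fun ξ hξ => hHd ξ (huIcc ▸ hξ)) (huIcc ▸ hH'cont).intervalIntegrable,
        (hbc s hs').1, (hbc s hs').2]
      ring
    -- substitute the PDE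
    have h1ne : ∀ᵐ ξ : ℝ, ξ ≠ (1:ℝ) := by
      rw [MeasureTheory.ae_iff]
      simp only [ne_eq, not_not, Set.setOf_eq_eq_singleton]
      exact Real.volume_singleton
    have hid : ∀ᵐ ξ ∂(volume : Measure ℝ), ξ ∈ Set.uIoc (0:ℝ) 1 →
        4 * u s ξ ^ 3 * ut s ξ =
          (12 * u s ξ ^ 2 * uξ s ξ ^ 2 + 4 * u s ξ ^ 3 * uξξ s ξ + 8 * u s ξ ^ 4 * uξ s ξ)
          - 12 * u s ξ ^ 2 * uξ s ξ ^ 2 := by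
      filter_upwards [h1ne] with ξ hne hmem
      rw [hIoc] at hmem
      have hξo : ξ ∈ Set.Ioo (0:ℝ) 1 := ⟨hmem.1, lt_of_le_of_ne hmem.2 hne⟩
      have hderiv_sq : deriv (fun η => u s η ^ 2) ξ = 2 * u s ξ * uξ s ξ := by
        have := ((huξ s hs' ξ (hsq hmem)).fun_pow 2).deriv
        simpa using this
      rw [hpde s hs ξ hξo, hderiv_sq]
      ring
    have heq := intervalIntegral.integral_congr_ae hid
    have hint1 : IntervalIntegrable (fun ξ => 12 * u s ξ ^ 2 * uξ s ξ ^ 2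
        + 4 * u s ξ ^ 3 * uξξ s ξ + 8 * u s ξ ^ 4 * uξ s ξ) volume 0 1 :=
      (huIcc ▸ hH'cont).intervalIntegrable
    have hint2 : IntervalIntegrable (fun ξ => 12 * u s ξ ^ 2 * uξ s ξ ^ 2) volume 0 1 :=
      (huIcc ▸ ((continuousOn_const.mul (hcu.pow 2)).mul (hcux.pow 2))).intervalIntegrable
    rw [heq, intervalIntegral.integral_sub hint1 hint2, hftc, zero_sub]
    -- Poincaré step
    have hpoin : (∫ ξ in (0:ℝ)..1, (u s ξ ^ 2) ^ 2) ≤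
        ∫ ξ in (0:ℝ)..1, (2 * u s ξ * uξ s ξ) ^ 2 := by
      refine poincare (v := fun ξ => u s ξ ^ 2) (v' := fun ξ => 2 * u s ξ * uξ s ξ)
        (fun ξ hξ => by simpa using (huξ s hs' ξ hξ).fun_pow 2)
        ((continuousOn_const.mul hcu).mul hcux) (by simp [(hbc s hs').1])
    have hrw1 : (∫ ξ in (0:ℝ)..1, (u s ξ ^ 2) ^ 2) = ∫ ξ in (0:ℝ)..1, u s ξ ^ 4 := by
      congr 1; funext ξ; ring
    have hrw2 : (∫ ξ in (0:ℝ)..1, 12 * u s ξ ^ 2 * uξ s ξ ^ 2) =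
        3 * ∫ ξ in (0:ℝ)..1, (2 * u s ξ * uξ s ξ) ^ 2 := by
      rw [← intervalIntegral.integral_const_mul]
      congr 1; funext ξ; ring
    have hEnn : 0 ≤ ∫ ξ in (0:ℝ)..1, u s ξ ^ 4 :=
      intervalIntegral.integral_nonneg zero_le_one fun ξ _ => by positivity
    have hpi : Real.pi ^ 2 ≤ 12 := by nlinarith [Real.pi_lt_d2, Real.pi_gt_three]
    rw [hrw1] at hpoin
    rw [hrw2]
    nlinarith [hpoin, hEnn]
  -- continuity of the energy on [0, t]
  have hEcont : ContinuousOn (fun r => ∫ ξ in (0:ℝ)..1, u r ξ ^ 4) (Set.Icc 0 t) := by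
    intro s hsmem
    rcases eq_or_lt_of_le hsmem.1 with rfl | hspos
    · refine intervalIntegral.continuousWithinAt_of_dominated_interval
        (bound := fun _ => M ^ 4) ?_ ?_ intervalIntegrable_const ?_
      · filter_upwards [self_mem_nhdsWithin] with x hx
        exact hmeas_slice ((hcont_slice hu_cont hx.1).pow 4)
      · filter_upwards [self_mem_nhdsWithin] with x hx
        refine Filter.Eventually.of_forall fun ξ hξ => ?_
        have hxK : ((x, ξ) : ℝ × ℝ) ∈ Set.Icc (0:ℝ) (t+1) ×ˢ Set.Icc (0:ℝ) 1 :=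
          ⟨⟨hx.1, by linarith [hx.2]⟩, hsq (hIoc ▸ hξ)⟩
        have h1 := hM _ hxK
        rw [Real.norm_eq_abs] at h1 ⊢
        rw [abs_pow]
        exact pow_le_pow_left₀ (abs_nonneg _) h1 4
      · refine Filter.Eventually.of_forall fun ξ hξ => ?_
        have hξ1 : ξ ∈ Set.Icc (0:ℝ) 1 := hsq (hIoc ▸ hξ)
        have hc : ContinuousWithinAt
            ((fun p : ℝ × ℝ => u p.1 p.2) ∘ (fun x : ℝ => ((x, ξ) : ℝ × ℝ)))
            (Set.Icc 0 t) 0 :=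
          ContinuousWithinAt.comp (hu_cont (0, ξ) ⟨Set.self_mem_Ici, hξ1⟩)
            ((continuous_id.prodMk continuous_const).continuousWithinAt)
            (fun x hx => ⟨hx.1, hξ1⟩)
        simpa [Function.comp] using hc.fun_pow 4
    · exact (hEd s hspos hsmem.2).continuousAt.continuousWithinAt
  -- Grönwall on [a, t]
  have grw : ∀ a : ℝ, 0 < a → a ≤ t →
      (∫ ξ in (0:ℝ)..1, u t ξ ^ 4) ≤
        (∫ ξ in (0:ℝ)..1, u a ξ ^ 4) * Real.exp ((-(Real.pi ^ 2) / 4) * (t - a)) := by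
    intro a ha hat
    have key := le_gronwallBound_of_liminf_deriv_right_le
      (f := fun r => ∫ ξ in (0:ℝ)..1, u r ξ ^ 4)
      (f' := fun s => ∫ ξ in (0:ℝ)..1, 4 * u s ξ ^ 3 * ut s ξ)
      (δ := ∫ ξ in (0:ℝ)..1, u a ξ ^ 4) (K := -(Real.pi ^ 2) / 4) (ε := 0)
      (a := a) (b := t)
      (hEcont.mono (Set.Icc_subset_Icc ha.le le_rfl))
      ?_ le_rfl ?_ t (Set.right_mem_Icc.2 hat)
    · rwa [gronwallBound_ε0] at key
    · intro x hx r hr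
      have hd := hEd x (lt_of_lt_of_le ha hx.1) hx.2.le
      have hsub2 : Set.Ioi x ⊆ {x}ᶜ := fun y hy => ne_of_gt hy
      have hslope := (hasDerivAt_iff_tendsto_slope.1 hd).mono_left
        (nhdsWithin_mono x hsub2)
      have h3 := hslope.eventually_lt_const hr
      refine (h3.mono fun z hz => ?_).frequently
      rwa [slope_def_field, div_eq_inv_mul] at hz
    · intro x hx
      have := hbound x (lt_of_lt_of_le ha hx.1) hx.2.le
      simpa using this
  -- limit a → 0⁺
  have hg0 : ContinuousWithinAt
      (fun a => (∫ ξ in (0:ℝ)..1, u a ξ ^ 4) * Real.exp ((-(Real.pi ^ 2) / 4) * (t - a)))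
      (Set.Icc 0 t) 0 :=
    (hEcont 0 ⟨le_rfl, htpos.le⟩).mul
      ((Real.continuous_exp.comp (continuous_const.mul
        (continuous_const.sub continuous_id))).continuousWithinAt)
  have hne : (𝓝[Set.Ioc (0:ℝ) t] 0).NeBot := by
    apply mem_closure_iff_nhdsWithin_neBot.1
    rw [closure_Ioc htpos.ne]
    exact ⟨le_rfl, htpos.le⟩
  have hlim : Filter.Tendsto
      (fun a => (∫ ξ in (0:ℝ)..1, u a ξ ^ 4) * Real.exp ((-(Real.pi ^ 2) / 4) * (t - a)))
      (𝓝[Set.Ioc 0 t] 0)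
      (𝓝 ((∫ ξ in (0:ℝ)..1, u 0 ξ ^ 4) * Real.exp ((-(Real.pi ^ 2) / 4) * (t - 0)))) :=
    hg0.mono_left (nhdsWithin_mono 0 Set.Ioc_subset_Icc_self)
  have final := ge_of_tendsto hlim (by
    filter_upwards [self_mem_nhdsWithin] with a ha
    exact grw a ha.1 ha.2)
  calc (∫ ξ in (0:ℝ)..1, u t ξ ^ 4)
      ≤ (∫ ξ in (0:ℝ)..1, u 0 ξ ^ 4) * Real.exp ((-(Real.pi ^ 2) / 4) * (t - 0)) := final
    _ = Real.exp (-(Real.pi ^ 2) * t / 4) * ∫ ξ in (0:ℝ)..1, u 0 ξ ^ 4 := by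
        rw [mul_comm]
        congr 1
        ring_nf
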